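/- Let E be a lextensive category and R a protocalibration closed under finite coproducts. Each hom-category Spn_R E(X, Y) has finite coproducts: the coproduct of spans (u : S → X, v : S → Y) and (u' : S' → X, v' : S' → Y) with u, u' ∈ R is the span ([u,u'] : S + S' → X, [v,v'] : S + S' → Y), and these coproducts are preserved by postcomposition with any span (r : T → Y, s : T → Z) with r ∈ R. -/

import Mathlib

open CategoryTheory Limits

universe v u

variable {E : Type u} [Category.{v} E]

/-- A span from `X` to `Y` with left leg in the class `R`:
a 1-morphism of the bicategory `Spn_R E`. -/
structure RSpan (R : MorphismProperty E) (X Y : E) : Type (max u v) where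
  mid : E
  left : mid ⟶ X
  right : mid ⟶ Y
  memR : R left

/-- A morphism of `R`-spans (a 2-morphism of `Spn_R E`; for a category `E` the
isomorphism classes of span morphisms are just span morphisms). -/
@[ext]
structure RSpanHom {R : MorphismProperty E} {X Y : E} (f g : RSpan R X Y) : Type v where
  hom : f.mid ⟶ g.mid
  wl : hom ≫ g.left = f.left := by aesop_cat
  wr : hom ≫ g.right = f.right := by aesop_cat

attribute [simp] RSpanHom.wl RSpanHom.wr

/-- The hom-category `Spn_R E (X, Y)`. -/
instance {R : MorphismProperty E} {X Y : E} : Category (RSpan R X Y) where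
  Hom := RSpanHom
  id f := ⟨𝟙 f.mid, by simp, by simp⟩
  comp a b := ⟨a.hom ≫ b.hom, by rw [Category.assoc, b.wl, a.wl],
    by rw [Category.assoc, b.wr, a.wr]⟩
  id_comp a := by apply RSpanHom.ext; simp [CategoryStruct.comp, CategoryStruct.id]
  comp_id a := by apply RSpanHom.ext; simp [CategoryStruct.comp, CategoryStruct.id]
  assoc a b c := by apply RSpanHom.ext; simp [CategoryStruct.comp]

/-- A span morphism, seen as a morphism in the hom-category. -/
def RSpanHom.toHom {R : MorphismProperty E} {X Y : E} {f g : RSpan R X Y}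
    (a : RSpanHom f g) : f ⟶ g := a

variable [HasPullbacks E]

/-- Postcomposition in `Spn_R E` with an `R`-span `t` from `Y` to `Z`
(composition of spans is by pullback). -/
@[simps]
noncomputable def postcompSpan (R : MorphismProperty E)
    (rcomp : ∀ {X Y Z : E} (f : X ⟶ Y) (g : Y ⟶ Z), R f → R g → R (f ≫ g))
    (rpb : ∀ {A B C : E} (i : A ⟶ B) (u : C ⟶ B), R u → R (pullback.fst i u))
    {X Y Z : E} (t : RSpan R Y Z) : RSpan R X Y ⥤ RSpan R X Z where
  obj f := ⟨pullback f.right t.left,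
    pullback.fst f.right t.left ≫ f.left,
    pullback.snd f.right t.left ≫ t.right,
    rcomp _ _ (rpb f.right t.left t.memR) f.memR⟩
  map {f f'} a :=
    { hom := pullback.map f.right t.left f'.right t.left a.hom (𝟙 t.mid) (𝟙 Y)
        (by simp [a.wr]) (by simp)
      wl := by
        rw [← Category.assoc, pullback.lift_fst, Category.assoc, a.wl]
      wr := by
        rw [← Category.assoc, pullback.lift_snd]
        simp }
  map_id f := by
    apply RSpanHom.ext
    apply pullback.hom_ext <;> simp [CategoryStruct.id]
  map_comp a b := by
    apply RSpanHom.ext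
    apply pullback.hom_ext <;> simp [CategoryStruct.comp, pullback.map_comp]

/-- If the underlying cofan of middles is a colimit in `E`, then the corresponding
cofan in the hom-category of `R`-spans is a colimit. -/
noncomputable def rspanIsColimitOfMidIsColimit {R : MorphismProperty E} {X Y : E}
    {f g h : RSpan R X Y} (i₁ : f ⟶ h) (i₂ : g ⟶ h)
    (hc : IsColimit (BinaryCofan.mk (RSpanHom.hom i₁) (RSpanHom.hom i₂))) :
    IsColimit (BinaryCofan.mk i₁ i₂) := by
  have hext : ∀ {P : E} (m m' : h.mid ⟶ P),
      i₁.hom ≫ m = i₁.hom ≫ m' → i₂.hom ≫ m = i₂.hom ≫ m' → m = m' := by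
    intro P m m' h1 h2
    apply hc.hom_ext
    rintro ⟨⟨⟩⟩ <;> simpa using (by assumption)
  have fl : ∀ (c' : BinaryCofan f.mid g.mid), i₁.hom ≫ hc.desc c' = c'.inl :=
    fun c' => hc.fac c' ⟨WalkingPair.left⟩
  have fr : ∀ (c' : BinaryCofan f.mid g.mid), i₂.hom ≫ hc.desc c' = c'.inr :=
    fun c' => hc.fac c' ⟨WalkingPair.right⟩
  refine BinaryCofan.isColimitMk
    (fun s => RSpanHom.toHom
      ⟨hc.desc (BinaryCofan.mk (RSpanHom.hom s.inl) (RSpanHom.hom s.inr)), ?_, ?_⟩)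
    (fun s => ?_) (fun s => ?_) (fun s m h1 h2 => ?_)
  · apply hext
    · erw [← Category.assoc, fl]
      exact s.inl.wl.trans i₁.wl.symm
    · erw [← Category.assoc, fr]
      exact s.inr.wl.trans i₂.wl.symm
  · apply hext
    · erw [← Category.assoc, fl]
      exact s.inl.wr.trans i₁.wr.symm
    · erw [← Category.assoc, fr]
      exact s.inr.wr.trans i₂.wr.symm
  · apply RSpanHom.ext
    exact fl _
  · apply RSpanHom.ext
    exact fr _
  · apply RSpanHom.ext
    apply hext
    · exact (congrArg RSpanHom.hom h1).trans
        (fl (BinaryCofan.mk s.inl.hom s.inr.hom)).symm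
    · exact (congrArg RSpanHom.hom h2).trans
        (fr (BinaryCofan.mk s.inl.hom s.inr.hom)).symm

/-- Let `E` be lextensive and `R` a protocalibration closed under finite coproducts.
Each hom-category `Spn_R E (X, Y)` has finite (binary) coproducts: the coproduct of
spans `(u, v)` and `(u', v')` is `([u,u'] : S ⨿ S' ⟶ X, [v,v'] : S ⨿ S' ⟶ Y)` with
injections induced by the coproduct injections, and these coproducts are preserved by
postcomposition with any `R`-span `(r : T ⟶ Y, s : T ⟶ Z)` with `r ∈ R`. -/
theorem RSpan_binary_coproducts_and_postcomp_preserves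
    [HasFiniteLimits E] [HasFiniteCoproducts E] [FinitaryExtensive E]
    (R : MorphismProperty E)
    (riso : ∀ {X Y : E} (f : X ⟶ Y), IsIso f → R f)
    (rcomp : ∀ {X Y Z : E} (f : X ⟶ Y) (g : Y ⟶ Z), R f → R g → R (f ≫ g))
    (rpb : ∀ {A B C : E} (i : A ⟶ B) (u : C ⟶ B), R u → R (pullback.fst i u))
    (rinit : ∀ X : E, R (initial.to X))
    (rdesc : ∀ {X Y Z : E} (f : X ⟶ Z) (g : Y ⟶ Z), R f → R g → R (coprod.desc f g))
    {X Y Z : E} (f g : RSpan R X Y) (t : RSpan R Y Z) :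
    Nonempty (IsColimit (BinaryCofan.mk
      (RSpanHom.toHom (f := f)
        (g := ⟨f.mid ⨿ g.mid, coprod.desc f.left g.left, coprod.desc f.right g.right,
          rdesc _ _ f.memR g.memR⟩)
        ⟨coprod.inl, by exact coprod.inl_desc _ _, by exact coprod.inl_desc _ _⟩)
      (RSpanHom.toHom (f := g)
        (g := ⟨f.mid ⨿ g.mid, coprod.desc f.left g.left, coprod.desc f.right g.right,
          rdesc _ _ f.memR g.memR⟩)
        ⟨coprod.inr, by exact coprod.inr_desc _ _, by exact coprod.inr_desc _ _⟩))) ∧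
    Nonempty (IsColimit (BinaryCofan.mk
      ((postcompSpan R rcomp rpb t).map (RSpanHom.toHom ⟨coprod.inl, by exact coprod.inl_desc _ _, by exact coprod.inl_desc _ _⟩))
      ((postcompSpan R rcomp rpb t).map
        (RSpanHom.toHom (f := g)
          (g := ⟨f.mid ⨿ g.mid, coprod.desc f.left g.left, coprod.desc f.right g.right,
            rdesc _ _ f.memR g.memR⟩)
          ⟨coprod.inr, by exact coprod.inr_desc _ _, by exact coprod.inr_desc _ _⟩)))) := by
  constructor
  · exact ⟨rspanIsColimitOfMidIsColimit _ _ (coprodIsCoprod f.mid g.mid)⟩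
  · refine ⟨rspanIsColimitOfMidIsColimit _ _ ?_⟩
    set h : RSpan R X Y := ⟨f.mid ⨿ g.mid, coprod.desc f.left g.left,
      coprod.desc f.right g.right, rdesc _ _ f.memR g.memR⟩ with hh
    have hvk := FinitaryExtensive.vanKampen _ (coprodIsCoprod f.mid g.mid)
    set m₁ := (RSpanHom.hom ((postcompSpan R rcomp rpb t).map
      (RSpanHom.toHom (f := f) (g := h) ⟨coprod.inl, by exact coprod.inl_desc _ _, by exact coprod.inl_desc _ _⟩))) with hm₁
    set m₂ := (RSpanHom.hom ((postcompSpan R rcomp rpb t).map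
      (RSpanHom.toHom (f := g) (g := h) ⟨coprod.inr, by exact coprod.inr_desc _ _, by exact coprod.inr_desc _ _⟩))) with hm₂
    have key := hvk (BinaryCofan.mk m₁ m₂)
      (mapPair (pullback.fst f.right t.left) (pullback.fst g.right t.left))
      (pullback.fst h.right t.left)
      (by
        ext ⟨⟨⟩⟩ <;> exact (pullback.lift_fst _ _ _).symm)
      (mapPair_equifibered _)
    refine (key.mpr ?_).some
    rintro ⟨⟨⟩⟩
    · refine IsPullback.of_right (h₁₂ := pullback.snd h.right t.left)
        ?_ (by exact pullback.lift_fst _ _ _) (IsPullback.of_hasPullback _ _).flip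
      have e1 : m₁ ≫ pullback.snd h.right t.left = pullback.snd f.right t.left := by
        exact (pullback.lift_snd _ _ _).trans (Category.comp_id _)
      have e2 : (coprod.inl : f.mid ⟶ _) ≫ h.right = f.right := by exact coprod.inl_desc _ _
      show IsPullback (m₁ ≫ pullback.snd h.right t.left) (pullback.fst f.right t.left)
        t.left ((coprod.inl : f.mid ⟶ _) ≫ h.right)
      rw [e1, e2]
      exact (IsPullback.of_hasPullback f.right t.left).flip
    · refine IsPullback.of_right (h₁₂ := pullback.snd h.right t.left)
        ?_ (by exact pullback.lift_fst _ _ _) (IsPullback.of_hasPullback _ _).flip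
      have e1 : m₂ ≫ pullback.snd h.right t.left = pullback.snd g.right t.left := by
        exact (pullback.lift_snd _ _ _).trans (Category.comp_id _)
      have e2 : (coprod.inr : g.mid ⟶ _) ≫ h.right = g.right := by exact coprod.inr_desc _ _
      show IsPullback (m₂ ≫ pullback.snd h.right t.left) (pullback.fst g.right t.left)
        t.left ((coprod.inr : g.mid ⟶ _) ≫ h.right)
      rw [e1, e2]
      exact (IsPullback.of_hasPullback g.right t.left).flip
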